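/- Let t_1, …, t_n be pairwise distinct complex numbers and let P ∈ ℂ[z_1,…,z_n] be any polynomial. Then the n-fold iterated residue at infinity Res_{z=∞} of P(z_1,…,z_n) · (∏_{1≤i<j≤n} (z_i − z_j))² / ∏_{i=1}^{n} ∏_{j=1}^{n} (t_i − z_j) equals ∑_{σ ∈ S_n} P(t_{σ(1)},…,t_{σ(n)}) · (∏_{1≤i<j≤n} (t_{σ(i)} − t_{σ(j)}))² / ∏_{1≤i≠j≤n} (t_{σ(i)} − t_{σ(j)}), the sum being over all permutations σ of {1,…,n}; equivalently, it equals (−1)^{n(n−1)/2} ∑_{σ ∈ S_n} P(t_{σ(1)},…,t_{σ(n)}). (This is the key intermediate residue computation, the step marked ⋆, in the proof of Formula 1: the squared Vandermonde numerator forces the residues to be taken at pairwise distinct points t_{k_1},…,t_{k_n}.) -/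

import Mathlib

/-- The iterated circle integral `∮_{|z_n|=R n} ⋯ ∮_{|z_1|=R 1} f dz_1⋯dz_n`,
with each circle centered at `0` and traversed counterclockwise; the innermost
integral is over the first variable, the outermost over the last. -/
noncomputable def iterCircleIntegral : (n : ℕ) → ((Fin n → ℂ) → ℂ) → (Fin n → ℝ) → ℂ
  | 0, f, _ => f Fin.elim0
  | n + 1, f, R =>
      ∮ z in C(0, R (Fin.last n)),
        iterCircleIntegral n (fun w => f (Fin.snoc w z)) (fun i => R i.castSucc)

/-- The iterated residue at infinity
`Res_{z=∞} f := (−1)ⁿ (2πi)⁻ⁿ ∮_{|z_n|=R n} ⋯ ∮_{|z_1|=R 1} f dz_1⋯dz_n`. -/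
noncomputable def iterResInfty (n : ℕ) (f : (Fin n → ℂ) → ℂ) (R : Fin n → ℝ) : ℂ :=
  (-1) ^ n * ((2 * (Real.pi : ℂ) * Complex.I) ^ n)⁻¹ * iterCircleIntegral n f R



open MeasureTheory Metric Finset Complex

lemma circleIntegral_add' {f g : ℂ → ℂ} {c : ℂ} {R : ℝ} (hf : CircleIntegrable f c R)
    (hg : CircleIntegrable g c R) :
    (∮ z in C(c, R), (f z + g z)) = (∮ z in C(c, R), f z) + ∮ z in C(c, R), g z := by
  simp only [circleIntegral, smul_add]
  exact intervalIntegral.integral_add hf.out hg.out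

lemma circleIntegral_finset_sum' {ι : Type*} (s : Finset ι) (f : ι → ℂ → ℂ) (c : ℂ) (R : ℝ)
    (h : ∀ i ∈ s, CircleIntegrable (f i) c R) :
    (∮ z in C(c, R), ∑ i ∈ s, f i z) = ∑ i ∈ s, ∮ z in C(c, R), f i z := by
  simp only [circleIntegral, smul_sum]
  rw [intervalIntegral.integral_finset_sum]
  exact fun i hi => (h i hi).out

lemma circleIntegral_monomial (a : ℂ) (k : ℕ) (c : ℂ) (R : ℝ) :
    (∮ z in C(c, R), a * z ^ k) = 0 := by
  rw [circleIntegral.integral_const_mul]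
  have h := circleIntegral.integral_sub_zpow_of_ne (n := (k : ℤ)) (by omega) c 0 R
  simp only [sub_zero, zpow_natCast] at h
  rw [h, mul_zero]

lemma circleIntegral_polynomial (Q : Polynomial ℂ) (c : ℂ) (R : ℝ) :
    (∮ z in C(c, R), Q.eval z) = 0 := by
  have h : ∀ z : ℂ, Q.eval z = ∑ k ∈ Finset.range (Q.natDegree + 1), Q.coeff k * z ^ k :=
    fun z => Polynomial.eval_eq_sum_range z
  calc (∮ z in C(c, R), Q.eval z)
      = ∮ z in C(c, R), ∑ k ∈ Finset.range (Q.natDegree + 1), Q.coeff k * z ^ k := by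
        simp only [h]
    _ = ∑ k ∈ Finset.range (Q.natDegree + 1), ∮ z in C(c, R), Q.coeff k * z ^ k := by
        refine circleIntegral_finset_sum' _ _ _ _ fun k _ => ?_
        exact ContinuousOn.circleIntegrable'
          ((continuous_const.mul (continuous_pow k)).continuousOn)
    _ = 0 := Finset.sum_eq_zero fun k _ => circleIntegral_monomial _ _ _ _

lemma oneVarResidue {m : ℕ} (t : Fin m → ℂ) (ht : Function.Injective t) (N : Polynomial ℂ)
    (R : ℝ) (hR : ∀ i, ‖t i‖ < R) :
    (∮ z in C(0, R), Polynomial.eval z N / ∏ i, (t i - z)) =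
      -(2 * Real.pi * Complex.I) * ∑ i, Polynomial.eval (t i) N /
        ∏ j ∈ Finset.univ.erase i, (t j - t i) := by
  rcases isEmpty_or_nonempty (Fin m) with hm | hm
  · simp only [Finset.univ_eq_empty, Finset.prod_empty, div_one, Finset.sum_empty, mul_zero]
    exact circleIntegral_polynomial N 0 R
  have hR0 : 0 < R := lt_of_le_of_lt (norm_nonneg _) (hR (Classical.arbitrary _))
  have hm1 : 1 ≤ m := (Classical.arbitrary (Fin m)).pos
  -- z on the circle is distinct from all poles
  have hsp : ∀ z ∈ sphere (0:ℂ) R, ∀ i, z - t i ≠ 0 := by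
    intro z hz i
    refine sub_ne_zero.mpr fun h => ?_
    rw [mem_sphere_zero_iff_norm] at hz
    rw [h] at hz
    exact (hR i).ne hz
  -- Lagrange interpolation and partial fractions
  set r : Fin m → ℂ := fun i => N.eval (t i) with hr
  set L : Polynomial ℂ := Lagrange.interpolate Finset.univ t r with hLdef
  have hdvd : (∏ i, (Polynomial.X - Polynomial.C (t i))) ∣ N - L := by
    refine Fintype.prod_dvd_of_coprime (Polynomial.pairwise_coprime_X_sub_C ht) fun i => ?_
    rw [Polynomial.dvd_iff_isRoot, Polynomial.IsRoot, Polynomial.eval_sub,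
      hLdef, Lagrange.eval_interpolate_at_node r ht.injOn (Finset.mem_univ i), hr, sub_self]
  obtain ⟨Q, hQ⟩ := hdvd
  -- the coefficients
  set E : Fin m → ℂ := fun i => ∏ j ∈ Finset.univ.erase i, (t j - t i) with hE
  have hcard : ∀ i : Fin m, (Finset.univ.erase i).card = m - 1 := fun i => by
    rw [Finset.card_erase_of_mem (Finset.mem_univ i), Finset.card_univ, Fintype.card_fin]
  have hsign : ∀ i, E i = (-1 : ℂ)^(m-1) * ∏ j ∈ Finset.univ.erase i, (t i - t j) := by
    intro i
    rw [hE]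
    calc (∏ j ∈ Finset.univ.erase i, (t j - t i))
        = ∏ j ∈ Finset.univ.erase i, ((-1 : ℂ) * (t i - t j)) :=
          Finset.prod_congr rfl fun j _ => by ring
      _ = (-1 : ℂ)^(m-1) * ∏ j ∈ Finset.univ.erase i, (t i - t j) := by
          rw [Finset.prod_mul_distrib, Finset.prod_const, hcard]
  have hEne : ∀ i, E i ≠ 0 := by
    intro i
    rw [hE]
    exact Finset.prod_ne_zero_iff.mpr fun j hj =>
      sub_ne_zero.mpr fun h => (Finset.mem_erase.mp hj).1 (ht h)
  -- pointwise identity on the circle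
  have key : Set.EqOn (fun z => Polynomial.eval z N / ∏ i, (t i - z))
      (fun z => (-1:ℂ)^m * Q.eval z + ∑ i, (-(r i) / E i) * (z - t i)⁻¹)
      (sphere (0:ℂ) R) := by
    intro z hz
    have hzt : ∀ i, z - t i ≠ 0 := hsp z hz
    have hD : Polynomial.eval z (∏ i, (Polynomial.X - Polynomial.C (t i)))
        = ∏ i, (z - t i) := by
      rw [Polynomial.eval_prod]
      exact Finset.prod_congr rfl fun i _ => by simp
    have hDne : (∏ i, (z - t i)) ≠ 0 := Finset.prod_ne_zero_iff.mpr fun i _ => hzt i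
    have hNz : Polynomial.eval z N = (∏ i, (z - t i)) * Q.eval z + L.eval z := by
      have h := congrArg (Polynomial.eval z) hQ
      rw [Polynomial.eval_sub, Polynomial.eval_mul, hD] at h
      linear_combination h
    have hprod : (∏ i, (t i - z)) = (-1:ℂ)^m * ∏ i, (z - t i) := by
      calc (∏ i, (t i - z)) = ∏ i : Fin m, ((-1 : ℂ) * (z - t i)) :=
            Finset.prod_congr rfl fun i _ => by ring
        _ = (-1 : ℂ)^m * ∏ i, (z - t i) := by
            rw [Finset.prod_mul_distrib, Finset.prod_const, Finset.card_univ, Fintype.card_fin]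
    have hLz : L.eval z = ∑ i, r i * ((∏ j ∈ Finset.univ.erase i, (t i - t j))⁻¹ *
        ∏ j ∈ Finset.univ.erase i, (z - t j)) := by
      rw [hLdef, Lagrange.interpolate_apply, Polynomial.eval_finset_sum]
      refine Finset.sum_congr rfl fun i _ => ?_
      rw [Polynomial.eval_mul, Polynomial.eval_C, Lagrange.basis, Polynomial.eval_prod]
      congr 1
      rw [← Finset.prod_inv_distrib, ← Finset.prod_mul_distrib]
      refine Finset.prod_congr rfl fun j _ => ?_
      rw [Lagrange.basisDivisor, Polynomial.eval_mul, Polynomial.eval_C, Polynomial.eval_sub,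
        Polynomial.eval_X, Polynomial.eval_C]
    -- now the computation
    show Polynomial.eval z N / ∏ i, (t i - z)
        = (-1:ℂ)^m * Q.eval z + ∑ i, (-(r i) / E i) * (z - t i)⁻¹
    have hm1' : ((-1:ℂ))^m = -(-1:ℂ)^(m-1) := by
      conv_lhs => rw [show m = (m-1) + 1 by omega]
      rw [pow_succ]
      ring
    rw [hNz, hprod]
    have hneg : ((-1:ℂ))^m ≠ 0 := pow_ne_zero _ (by norm_num)
    rw [add_div, mul_comm ((-1:ℂ)^m) (∏ i, (z - t i)), mul_div_mul_comm,
      div_self hDne, one_mul, ← div_div]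
    congr 1
    · rw [div_eq_iff hneg, mul_comm ((-1:ℂ)^m), mul_assoc, ← pow_add,
        Even.neg_one_pow ⟨m, rfl⟩, mul_one]
    -- the principal part
    rw [hLz, Finset.sum_div, Finset.sum_div]
    refine Finset.sum_congr rfl fun i _ => ?_
    have hsplit : (∏ j, (z - t j)) = (z - t i) * ∏ j ∈ Finset.univ.erase i, (z - t j) :=
      (Finset.mul_prod_erase _ _ (Finset.mem_univ i)).symm
    have herane : (∏ j ∈ Finset.univ.erase i, (z - t j)) ≠ 0 :=
      Finset.prod_ne_zero_iff.mpr fun j _ => hzt j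
    have hprodne : (∏ j ∈ Finset.univ.erase i, (t i - t j)) ≠ 0 :=
      Finset.prod_ne_zero_iff.mpr fun j hj =>
        sub_ne_zero.mpr fun h => (Finset.mem_erase.mp hj).1 (ht h.symm)
    have calcaux : ∀ (a A B u s : ℂ), A ≠ 0 → B ≠ 0 → u ≠ 0 → s ≠ 0 →
        a * (A⁻¹ * B) / (u * B) / -s = -a / (s * A) * u⁻¹ := by
      intro a A B u s hA hB hu hs
      field_simp
    rw [hsplit, hsign i, hm1']
    exact calcaux (r i) _ _ _ _ hprodne herane (hzt i)
      (pow_ne_zero _ (by norm_num))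
  rw [circleIntegral.integral_congr hR0.le key]
  have hint1 : CircleIntegrable (fun z => (-1:ℂ)^m * Q.eval z) 0 R :=
    ContinuousOn.circleIntegrable hR0.le
      ((continuous_const.mul Q.continuous).continuousOn)
  have hint2 : ∀ i : Fin m, CircleIntegrable (fun z => (-(r i) / E i) * (z - t i)⁻¹) 0 R := by
    intro i
    refine ContinuousOn.circleIntegrable hR0.le (continuousOn_const.mul ?_)
    exact ContinuousOn.inv₀ ((continuous_id.sub continuous_const).continuousOn)
      fun z hz => hsp z hz i
  rw [circleIntegral_add' hint1 (by
      refine ContinuousOn.circleIntegrable hR0.le ?_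
      refine continuousOn_finset_sum _ fun i _ => ?_
      exact continuousOn_const.mul (ContinuousOn.inv₀
        ((continuous_id.sub continuous_const).continuousOn) fun z hz => hsp z hz i)),
    circleIntegral_finset_sum' _ _ _ _ fun i _ => hint2 i]
  have h1 : (∮ z in C(0, R), (-1:ℂ)^m * Q.eval z) = 0 := by
    rw [circleIntegral.integral_const_mul, circleIntegral_polynomial, mul_zero]
  have h2 : ∀ i : Fin m, (∮ z in C(0, R), (-(r i) / E i) * (z - t i)⁻¹)
      = (-(r i) / E i) * (2 * Real.pi * Complex.I) := by
    intro i
    rw [circleIntegral.integral_const_mul, circleIntegral.integral_sub_inv_of_mem_ball]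
    rw [mem_ball_zero_iff]
    exact hR i
  rw [h1, zero_add]
  rw [Finset.sum_congr rfl fun i _ => h2 i, ← Finset.sum_mul]
  rw [Finset.sum_congr rfl (fun i _ => by rw [neg_div] : ∀ i ∈ Finset.univ,
    (-(r i) / E i) = -(r i / E i)), Finset.sum_neg_distrib]
  ring

lemma iterCircleIntegral_congr (n : ℕ) (f g : (Fin n → ℂ) → ℂ) (R : Fin n → ℝ)
    (h : f = g) : iterCircleIntegral n f R = iterCircleIntegral n g R := by rw [h]

lemma iterCircleIntegral_const_mul (n : ℕ) (c : ℂ) (f : (Fin n → ℂ) → ℂ) (R : Fin n → ℝ) :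
    iterCircleIntegral n (fun z => c * f z) R = c * iterCircleIntegral n f R := by
  induction n generalizing c with
  | zero => simp [iterCircleIntegral]
  | succ n ih =>
      rw [iterCircleIntegral, iterCircleIntegral]
      rw [show (fun z => iterCircleIntegral n (fun w => c * f (Fin.snoc w z))
        (fun i => R i.castSucc)) = fun z => c * iterCircleIntegral n (fun w => f (Fin.snoc w z))
        (fun i => R i.castSucc) from funext fun z => ih c _ _]
      exact circleIntegral.integral_const_mul c _ 0 _
  -- note: rewriting under the integral sign

lemma mv_snoc_eval {n : ℕ} (Q : MvPolynomial (Fin (n+1)) ℂ) (w : Fin n → ℂ) (z : ℂ) :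
    MvPolynomial.eval (Fin.snoc w z) Q =
      MvPolynomial.eval w
        (MvPolynomial.aeval (Fin.snoc MvPolynomial.X (MvPolynomial.C z)) Q) := by
  have h := MvPolynomial.comp_aeval_apply (f := Fin.snoc MvPolynomial.X (MvPolynomial.C z))
    (MvPolynomial.aeval (R := ℂ) w) Q
  have h2 : (fun i => MvPolynomial.aeval w
      ((Fin.snoc MvPolynomial.X (MvPolynomial.C z) : Fin (n+1) → MvPolynomial (Fin n) ℂ) i))
      = Fin.snoc w z := by
    funext i
    refine Fin.lastCases ?_ (fun j => ?_) i <;> simp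
  rw [← MvPolynomial.coe_aeval_eq_eval, ← MvPolynomial.coe_aeval_eq_eval]
  show MvPolynomial.aeval (Fin.snoc w z) Q = MvPolynomial.aeval w (MvPolynomial.aeval _ Q)
  rw [h, h2]

lemma mv_snoc_polyeval {n : ℕ} (Q : MvPolynomial (Fin (n+1)) ℂ) (v : Fin n → ℂ) (z : ℂ) :
    Polynomial.eval z
      (MvPolynomial.aeval (Fin.snoc (fun j => Polynomial.C (v j)) Polynomial.X) Q) =
      MvPolynomial.eval (Fin.snoc v z) Q := by
  have h := MvPolynomial.comp_aeval_apply
    (f := Fin.snoc (fun j => Polynomial.C (v j)) Polynomial.X)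
    (Polynomial.aeval (R := ℂ) z) Q
  have h2 : (fun i => Polynomial.aeval z
      ((Fin.snoc (fun j => Polynomial.C (v j)) Polynomial.X : Fin (n+1) → Polynomial ℂ) i))
      = Fin.snoc v z := by
    funext i
    refine Fin.lastCases ?_ (fun j => ?_) i <;> simp
  rw [← Polynomial.coe_aeval_eq_eval, h, h2, ← MvPolynomial.coe_aeval_eq_eval]
  rfl

lemma keyResidue {m : ℕ} (t : Fin m → ℂ) (ht : Function.Injective t) :
    ∀ (n : ℕ) (Q : MvPolynomial (Fin n) ℂ) (R : Fin n → ℝ),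
      (∀ j i, ‖t i‖ < R j) →
      iterCircleIntegral n
        (fun z => MvPolynomial.eval z Q / ∏ i, ∏ j, (t i - z j)) R =
      (-(2 * Real.pi * Complex.I))^n *
        ∑ k : Fin n → Fin m, MvPolynomial.eval (fun j => t (k j)) Q /
          ∏ j, ∏ i ∈ Finset.univ.erase (k j), (t i - t (k j)) := by
  intro n
  induction n with
  | zero =>
      intro Q R hR
      rw [iterCircleIntegral]
      rw [Fintype.sum_unique]
      simp only [Finset.univ_eq_empty, Finset.prod_empty, Finset.prod_const_one, div_one,
        pow_zero, one_mul]
      exact congrArg (fun v => MvPolynomial.eval v Q) (Subsingleton.elim _ _)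
  | succ n ih =>
      intro Q R hR
      set A : ℂ := -(2 * Real.pi * Complex.I) with hA
      set R' : Fin n → ℝ := fun i => R i.castSucc with hR'def
      have hR' : ∀ j i, ‖t i‖ < R' j := fun j i => hR j.castSucc i
      set Qz : ℂ → MvPolynomial (Fin n) ℂ :=
        fun ζ => MvPolynomial.aeval (Fin.snoc MvPolynomial.X (MvPolynomial.C ζ)) Q with hQz
      set N : (Fin n → Fin m) → Polynomial ℂ :=
        fun k => MvPolynomial.aeval
          (Fin.snoc (fun j => Polynomial.C (t (k j))) Polynomial.X) Q with hN
      set E : (Fin n → Fin m) → ℂ :=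
        fun k => ∏ j, ∏ i ∈ Finset.univ.erase (k j), (t i - t (k j)) with hE
      set F : Fin m → ℂ :=
        fun i' => ∏ j ∈ Finset.univ.erase i', (t j - t i') with hF
      have hsplitD : ∀ (w : Fin n → ℂ) (ζ : ℂ),
          (∏ i, ∏ j, (t i - (Fin.snoc w ζ : Fin (n+1) → ℂ) j)) =
            (∏ i, ∏ j, (t i - w j)) * ∏ i, (t i - ζ) := by
        intro w ζ
        rw [← Finset.prod_mul_distrib]
        refine Finset.prod_congr rfl fun i _ => ?_
        rw [Fin.prod_univ_castSucc]
        simp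
      -- the inner n-fold integral, as a function of the outer variable
      have hfun : (fun ζ => iterCircleIntegral n
            (fun w => MvPolynomial.eval (Fin.snoc w ζ) Q /
              ∏ i, ∏ j, (t i - (Fin.snoc w ζ : Fin (n+1) → ℂ) j)) R') =
          fun ζ => ∑ k : Fin n → Fin m,
            (A^n / E k) * (Polynomial.eval ζ (N k) / ∏ i, (t i - ζ)) := by
        funext ζ
        have h1 : (fun w => MvPolynomial.eval (Fin.snoc w ζ) Q /
              ∏ i, ∏ j, (t i - (Fin.snoc w ζ : Fin (n+1) → ℂ) j)) =
            fun w => (∏ i, (t i - ζ))⁻¹ *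
              (MvPolynomial.eval w (Qz ζ) / ∏ i, ∏ j, (t i - w j)) := by
          funext w
          rw [hsplitD w ζ, mv_snoc_eval]
          rw [div_eq_mul_inv, div_eq_mul_inv, mul_inv]
          ring
        rw [h1, iterCircleIntegral_const_mul, ih (Qz ζ) R' hR', Finset.mul_sum,
          Finset.mul_sum]
        refine Finset.sum_congr rfl fun k _ => ?_
        have h2 : MvPolynomial.eval (fun j => t (k j)) (Qz ζ) =
            Polynomial.eval ζ (N k) := by
          rw [hQz, ← mv_snoc_eval, hN, mv_snoc_polyeval]
        rw [h2]
        rw [div_eq_mul_inv, div_eq_mul_inv, div_eq_mul_inv]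
        ring
      rw [iterCircleIntegral, hfun]
      -- integrate the sum term by term
      have hsp' : ∀ ζ ∈ sphere (0:ℂ) |R (Fin.last n)|, (∏ i, (t i - ζ)) ≠ 0 := by
        intro ζ hζ
        refine Finset.prod_ne_zero_iff.mpr fun i _ => sub_ne_zero.mpr fun h => ?_
        rw [mem_sphere_zero_iff_norm] at hζ
        have : ‖t i‖ = |R (Fin.last n)| := by
          rw [← h] at hζ; exact hζ
        have h2 : R (Fin.last n) ≤ |R (Fin.last n)| := le_abs_self _
        exact absurd this (ne_of_lt (lt_of_lt_of_le (hR (Fin.last n) i) h2))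
      rw [circleIntegral_finset_sum' _ _ _ _ (fun k _ => ?_)]
      swap
      · refine ContinuousOn.circleIntegrable' (continuousOn_const.mul (ContinuousOn.div
          ((N k).continuous.continuousOn) ?_ hsp'))
        exact Continuous.continuousOn (continuous_finset_prod _ fun i _ =>
          (continuous_const.sub continuous_id))
      have hone : ∀ k : Fin n → Fin m,
          (∮ ζ in C(0, R (Fin.last n)), (A^n / E k) *
            (Polynomial.eval ζ (N k) / ∏ i, (t i - ζ))) =
          (A^n / E k) * (A * ∑ i', Polynomial.eval (t i') (N k) / F i') := by
        intro k
        rw [circleIntegral.integral_const_mul, oneVarResidue t ht (N k) _ (hR (Fin.last n))]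
      rw [Finset.sum_congr rfl fun k _ => hone k]
      -- now reindex the target sum via snoc
      have hNk : ∀ (k : Fin n → Fin m) (i' : Fin m),
          Polynomial.eval (t i') (N k) =
            MvPolynomial.eval (fun j => t ((Fin.snoc k i' : Fin (n+1) → Fin m) j)) Q := by
        intro k i'
        have hfn : (fun j => t ((Fin.snoc k i' : Fin (n+1) → Fin m) j)) =
            Fin.snoc (fun j => t (k j)) (t i') := by
          funext j
          refine Fin.lastCases ?_ (fun j => ?_) j <;> simp
        rw [hN, mv_snoc_polyeval, hfn]
      have hEsplit : ∀ (k : Fin n → Fin m) (i' : Fin m),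
          (∏ j : Fin (n+1), ∏ i ∈ Finset.univ.erase
              ((Fin.snoc k i' : Fin (n+1) → Fin m) j),
              (t i - t ((Fin.snoc k i' : Fin (n+1) → Fin m) j))) = E k * F i' := by
        intro k i'
        rw [Fin.prod_univ_castSucc]
        simp only [Fin.snoc_castSucc, Fin.snoc_last]
        rfl
      rw [← Equiv.sum_comp (Fin.snocEquiv (fun _ => Fin m))
        (fun k' : Fin (n+1) → Fin m => MvPolynomial.eval (fun j => t (k' j)) Q /
          ∏ j, ∏ i ∈ Finset.univ.erase (k' j), (t i - t (k' j)))]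
      rw [Fintype.sum_prod_type]
      simp only [Fin.snocEquiv_apply]
      simp only [Finset.mul_sum]
      rw [Finset.sum_comm]
      refine Finset.sum_congr rfl fun i' _ => Finset.sum_congr rfl fun k _ => ?_
      rw [← hNk k i', hEsplit k i']
      rw [pow_succ, div_eq_mul_inv, div_eq_mul_inv, div_eq_mul_inv, mul_inv]
      ring

lemma prod_gt_eq_prod_lt {n : ℕ} (g : Fin n × Fin n → ℂ) :
    ∏ p ∈ Finset.univ.filter (fun p : Fin n × Fin n => p.2 < p.1), g p =
      ∏ p ∈ Finset.univ.filter (fun p : Fin n × Fin n => p.1 < p.2), g p.swap := by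
  refine Finset.prod_bij (fun p _ => p.swap) ?_ ?_ ?_ ?_
  · intro p hp
    simp only [Finset.mem_filter, Finset.mem_univ, true_and] at hp ⊢
    exact hp
  · intro p _ q _ h
    exact Prod.swap_injective h
  · intro p hp
    simp only [Finset.mem_filter, Finset.mem_univ, true_and] at hp
    exact ⟨p.swap, by simpa using hp, by simp⟩
  · intro p _
    simp

lemma filter_ne_union {n : ℕ} :
    Finset.univ.filter (fun p : Fin n × Fin n => p.1 ≠ p.2) =
      (Finset.univ.filter (fun p : Fin n × Fin n => p.1 < p.2)) ∪
      (Finset.univ.filter (fun p : Fin n × Fin n => p.2 < p.1)) := by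
  ext p
  simp only [Finset.mem_filter, Finset.mem_union, Finset.mem_univ, true_and]
  constructor
  · intro h; exact h.lt_or_gt
  · intro h; rcases h with h | h
    · exact ne_of_lt h
    · exact (ne_of_lt h).symm

lemma filter_lt_gt_disjoint {n : ℕ} :
    Disjoint (Finset.univ.filter (fun p : Fin n × Fin n => p.1 < p.2))
      (Finset.univ.filter (fun p : Fin n × Fin n => p.2 < p.1)) := by
  rw [Finset.disjoint_filter]
  intro p _ h1 h2
  exact absurd h1 (asymm h2)

variable {n : ℕ}

lemma prod_ne_eq_double_prod (g : Fin n × Fin n → ℂ) :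
    ∏ p ∈ Finset.univ.filter (fun p : Fin n × Fin n => p.1 ≠ p.2), g p =
      ∏ j, ∏ i ∈ Finset.univ.erase j, g (i, j) := by
  rw [Finset.prod_filter]
  rw [Fintype.prod_prod_type]
  rw [Finset.prod_comm]
  refine Finset.prod_congr rfl fun j _ => ?_
  rw [← Finset.prod_filter, Finset.filter_ne']

lemma card_lt_pairs : (Finset.univ.filter (fun p : Fin n × Fin n => p.1 < p.2)).card
    = n * (n - 1) / 2 := by
  have hswap : (Finset.univ.filter (fun p : Fin n × Fin n => p.1 < p.2)).card =
      (Finset.univ.filter (fun p : Fin n × Fin n => p.2 < p.1)).card := by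
    refine Finset.card_bij (fun p _ => p.swap) ?_ ?_ ?_
    · intro p hp
      simp only [Finset.mem_filter, Finset.mem_univ, true_and] at hp ⊢
      exact hp
    · intro p hp q hq h
      exact Prod.swap_injective h
    · intro p hp
      simp only [Finset.mem_filter, Finset.mem_univ, true_and] at hp
      exact ⟨p.swap, by simpa using hp, by simp⟩
  have hunion : Finset.univ.filter (fun p : Fin n × Fin n => p.1 ≠ p.2) =
      (Finset.univ.filter (fun p : Fin n × Fin n => p.1 < p.2)) ∪
      (Finset.univ.filter (fun p : Fin n × Fin n => p.2 < p.1)) := by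
    ext p
    simp only [Finset.mem_filter, Finset.mem_union, Finset.mem_univ, true_and]
    constructor
    · intro h; exact h.lt_or_gt
    · intro h; rcases h with h | h
      · exact ne_of_lt h
      · exact (ne_of_lt h).symm
  have hdisj : Disjoint (Finset.univ.filter (fun p : Fin n × Fin n => p.1 < p.2))
      (Finset.univ.filter (fun p : Fin n × Fin n => p.2 < p.1)) := by
    rw [Finset.disjoint_filter]
    intro p _ h1 h2
    exact absurd h1 (asymm h2)
  have hcardne : (Finset.univ.filter (fun p : Fin n × Fin n => p.1 ≠ p.2)).card
      = n * n - n := by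
    have h1 : Finset.univ.filter (fun p : Fin n × Fin n => p.1 ≠ p.2) =
        (Finset.univ : Finset (Fin n)).offDiag := by
      ext p
      simp [Finset.mem_offDiag]
    rw [h1, Finset.offDiag_card, Finset.card_univ, Fintype.card_fin]
  have hthis := Finset.card_union_of_disjoint hdisj
  rw [← hunion, hcardne, ← hswap] at hthis
  have hnn : n * (n - 1) = n * n - n := by
    cases n with
    | zero => simp
    | succ k =>
        simp only [Nat.succ_sub_one]
        have : (k + 1) * (k + 1) = (k + 1) * k + (k + 1) := by ring
        rw [this, Nat.add_sub_cancel, Nat.mul_comm]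
  rw [hnn]
  generalize hM : n * n - n = M at hthis ⊢
  omega



/-- the step ⋆ in the proof of Formula 1: for pairwise distinct
`t₁,…,t_n` and any polynomial `P`, the `n`-fold iterated residue at infinity of
`P(z) · Vand(z)² / ∏_{i,j}(t_i − z_j)` equals
`∑_{σ ∈ S_n} P(t_{σ(1)},…,t_{σ(n)}) Vand(t_σ)² / ∏_{i≠j}(t_{σ(i)} − t_{σ(j)})`,
and equivalently `(−1)^{n(n−1)/2} ∑_{σ ∈ S_n} P(t_{σ(1)},…,t_{σ(n)})`. -/
theorem squared_vandermonde_residue (n : ℕ) (t : Fin n → ℂ) (ht : Function.Injective t)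
    (P : MvPolynomial (Fin n) ℂ)
    (R : Fin n → ℝ) (hR : ∀ j i, ‖t i‖ < R j) :
    (iterResInfty n (fun z =>
        MvPolynomial.eval z P *
          (∏ p ∈ Finset.univ.filter (fun p : Fin n × Fin n => p.1 < p.2),
            (z p.1 - z p.2)) ^ 2 /
          ∏ i : Fin n, ∏ j : Fin n, (t i - z j)) R =
      ∑ σ : Equiv.Perm (Fin n),
        MvPolynomial.eval (fun i => t (σ i)) P *
          (∏ p ∈ Finset.univ.filter (fun p : Fin n × Fin n => p.1 < p.2),
            (t (σ p.1) - t (σ p.2))) ^ 2 /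
          ∏ p ∈ Finset.univ.filter (fun p : Fin n × Fin n => p.1 ≠ p.2),
            (t (σ p.1) - t (σ p.2))) ∧
    (iterResInfty n (fun z =>
        MvPolynomial.eval z P *
          (∏ p ∈ Finset.univ.filter (fun p : Fin n × Fin n => p.1 < p.2),
            (z p.1 - z p.2)) ^ 2 /
          ∏ i : Fin n, ∏ j : Fin n, (t i - z j)) R =
      (-1 : ℂ) ^ (n * (n - 1) / 2) *
        ∑ σ : Equiv.Perm (Fin n), MvPolynomial.eval (fun i => t (σ i)) P) := by
  
  classical
  set V : MvPolynomial (Fin n) ℂ :=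
    ∏ p ∈ Finset.univ.filter (fun p : Fin n × Fin n => p.1 < p.2),
      (MvPolynomial.X p.1 - MvPolynomial.X p.2) with hV
  set Q : MvPolynomial (Fin n) ℂ := P * V ^ 2 with hQ
  -- the integrand in polynomial form
  have hfeq : (fun z : Fin n → ℂ =>
      MvPolynomial.eval z P *
        (∏ p ∈ Finset.univ.filter (fun p : Fin n × Fin n => p.1 < p.2),
          (z p.1 - z p.2)) ^ 2 /
        ∏ i : Fin n, ∏ j : Fin n, (t i - z j)) =
      (fun z : Fin n → ℂ => MvPolynomial.eval z Q / ∏ i : Fin n, ∏ j : Fin n, (t i - z j)) := by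
    funext z
    rw [hQ, map_mul, map_pow, hV, map_prod]
    simp
  have hevalV : ∀ k : Fin n → Fin n,
      MvPolynomial.eval (fun j => t (k j)) V =
        ∏ p ∈ Finset.univ.filter (fun p : Fin n × Fin n => p.1 < p.2),
          (t (k p.1) - t (k p.2)) := by
    intro k
    rw [hV, map_prod]
    simp
  have hevalQ : ∀ k : Fin n → Fin n,
      MvPolynomial.eval (fun j => t (k j)) Q =
        MvPolynomial.eval (fun j => t (k j)) P *
          (∏ p ∈ Finset.univ.filter (fun p : Fin n × Fin n => p.1 < p.2),
            (t (k p.1) - t (k p.2))) ^ 2 := by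
    intro k
    rw [hQ, map_mul, map_pow, hevalV]
  -- main residue computation
  have h2pi : (2 * (Real.pi : ℂ) * Complex.I) ≠ 0 := by
    simp [Real.pi_ne_zero, Complex.I_ne_zero]
  have hmain : iterResInfty n (fun z =>
      MvPolynomial.eval z P *
        (∏ p ∈ Finset.univ.filter (fun p : Fin n × Fin n => p.1 < p.2),
          (z p.1 - z p.2)) ^ 2 /
        ∏ i : Fin n, ∏ j : Fin n, (t i - z j)) R =
      ∑ k : Fin n → Fin n, MvPolynomial.eval (fun j => t (k j)) Q /
        ∏ j, ∏ i ∈ Finset.univ.erase (k j), (t i - t (k j)) := by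
    rw [iterResInfty, hfeq, keyResidue t ht n Q R hR]
    have hstep : (-(2 * (Real.pi : ℂ) * Complex.I)) ^ n
        = (-1 : ℂ) ^ n * (2 * (Real.pi : ℂ) * Complex.I) ^ n := by
      rw [← neg_one_mul, mul_pow]
    rw [hstep]
    have h1 : ((-1 : ℂ) ^ n) * ((-1 : ℂ) ^ n) = 1 := by
      rw [← pow_add]; exact Even.neg_one_pow ⟨n, rfl⟩
    have h2 : ((2 * (Real.pi : ℂ) * Complex.I) ^ n)⁻¹ *
        (2 * (Real.pi : ℂ) * Complex.I) ^ n = 1 :=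
      inv_mul_cancel₀ (pow_ne_zero _ h2pi)
    calc (-1 : ℂ) ^ n * ((2 * (Real.pi : ℂ) * Complex.I) ^ n)⁻¹ *
          ((-1 : ℂ) ^ n * (2 * (Real.pi : ℂ) * Complex.I) ^ n *
            ∑ k : Fin n → Fin n, MvPolynomial.eval (fun j => t (k j)) Q /
              ∏ j, ∏ i ∈ Finset.univ.erase (k j), (t i - t (k j)))
        = (((-1 : ℂ) ^ n) * ((-1 : ℂ) ^ n)) *
            (((2 * (Real.pi : ℂ) * Complex.I) ^ n)⁻¹ *
              (2 * (Real.pi : ℂ) * Complex.I) ^ n) *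
            ∑ k : Fin n → Fin n, MvPolynomial.eval (fun j => t (k j)) Q /
              ∏ j, ∏ i ∈ Finset.univ.erase (k j), (t i - t (k j)) := by ring
      _ = _ := by rw [h1, h2, one_mul, one_mul]
  -- non-bijective maps contribute zero
  have hzero : ∀ k : Fin n → Fin n, ¬ Function.Bijective k →
      MvPolynomial.eval (fun j => t (k j)) Q = 0 := by
    intro k hk
    have hinj : ¬ Function.Injective k := fun h =>
      hk (Finite.injective_iff_bijective.mp h)
    rw [Function.not_injective_iff] at hinj
    obtain ⟨a, b, hab, hne⟩ := hinj
    have hzeroV : (∏ p ∈ Finset.univ.filter (fun p : Fin n × Fin n => p.1 < p.2),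
        (t (k p.1) - t (k p.2))) = 0 := by
      rcases hne.lt_or_gt with h | h
      · exact Finset.prod_eq_zero (Finset.mem_filter.mpr ⟨Finset.mem_univ (a, b), h⟩)
          (by rw [hab, sub_self])
      · exact Finset.prod_eq_zero (Finset.mem_filter.mpr ⟨Finset.mem_univ (b, a), h⟩)
          (by rw [hab, sub_self])
    rw [hevalQ, hzeroV]
    ring
  -- restrict the sum to permutations
  have hsum : (∑ k : Fin n → Fin n, MvPolynomial.eval (fun j => t (k j)) Q /
        ∏ j, ∏ i ∈ Finset.univ.erase (k j), (t i - t (k j))) =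
      ∑ σ : Equiv.Perm (Fin n), MvPolynomial.eval (fun j => t (σ j)) Q /
        ∏ j, ∏ i ∈ Finset.univ.erase (σ j), (t i - t (σ j)) := by
    rw [← Finset.sum_filter_of_ne
      (p := fun k : Fin n → Fin n => Function.Bijective k)
      (fun k _ h => by
        by_contra hb
        exact h (by rw [hzero k hb, zero_div]))]
    refine (Finset.sum_bij' (fun (σ : Equiv.Perm (Fin n)) _ => (σ : Fin n → Fin n))
      (fun k hk => Equiv.ofBijective k (Finset.mem_filter.mp hk).2)
      ?_ ?_ ?_ ?_ ?_).symm
    · intro σ _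
      exact Finset.mem_filter.mpr ⟨Finset.mem_univ _, σ.bijective⟩
    · intro k _
      exact Finset.mem_univ _
    · intro σ _
      ext x
      rfl
    · intro k _
      rfl
    · intro σ _
      rfl
  -- the denominator as a product over distinct pairs
  have hden : ∀ σ : Equiv.Perm (Fin n),
      (∏ j, ∏ i ∈ Finset.univ.erase (σ j), (t i - t (σ j))) =
        ∏ p ∈ Finset.univ.filter (fun p : Fin n × Fin n => p.1 ≠ p.2),
          (t (σ p.1) - t (σ p.2)) := by
    intro σ
    rw [prod_ne_eq_double_prod (fun p => t (σ p.1) - t (σ p.2))]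
    refine Finset.prod_congr rfl fun j _ => ?_
    refine (Finset.prod_bij' (fun i _ => σ i) (fun i _ => σ.symm i) ?_ ?_ ?_ ?_ ?_).symm
    · intro i hi
      simp only [Finset.mem_erase, Finset.mem_univ, and_true] at hi ⊢
      exact fun h => hi (σ.injective h)
    · intro i hi
      simp only [Finset.mem_erase, Finset.mem_univ, and_true] at hi ⊢
      intro h
      exact hi (by rw [← h, Equiv.apply_symm_apply])
    · intro i _
      simp
    · intro i _
      simp
    · intro i _
      rfl
  refine ⟨?_, ?_⟩
  · rw [hmain, hsum]
    refine Finset.sum_congr rfl fun σ _ => ?_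
    rw [hevalQ, hden]
  · rw [hmain, hsum]
    have hVne : ∀ σ : Equiv.Perm (Fin n),
        (∏ p ∈ Finset.univ.filter (fun p : Fin n × Fin n => p.1 < p.2),
          (t (σ p.1) - t (σ p.2))) ≠ 0 := by
      intro σ
      refine Finset.prod_ne_zero_iff.mpr fun p hp => sub_ne_zero.mpr fun h => ?_
      have := σ.injective (ht h)
      exact absurd this (ne_of_lt (Finset.mem_filter.mp hp).2)
    have hDsplit : ∀ σ : Equiv.Perm (Fin n),
        (∏ p ∈ Finset.univ.filter (fun p : Fin n × Fin n => p.1 ≠ p.2),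
          (t (σ p.1) - t (σ p.2))) =
        (-1 : ℂ) ^ (n * (n - 1) / 2) *
          (∏ p ∈ Finset.univ.filter (fun p : Fin n × Fin n => p.1 < p.2),
            (t (σ p.1) - t (σ p.2))) ^ 2 := by
      intro σ
      rw [filter_ne_union, Finset.prod_union filter_lt_gt_disjoint,
        prod_gt_eq_prod_lt (fun p => t (σ p.1) - t (σ p.2))]
      have hsw : (∏ p ∈ Finset.univ.filter (fun p : Fin n × Fin n => p.1 < p.2),
          (t (σ p.swap.1) - t (σ p.swap.2))) =
          ∏ p ∈ Finset.univ.filter (fun p : Fin n × Fin n => p.1 < p.2),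
            ((-1 : ℂ) * (t (σ p.1) - t (σ p.2))) :=
        Finset.prod_congr rfl fun p _ => by simp only [Prod.fst_swap, Prod.snd_swap]; ring
      rw [hsw, Finset.prod_mul_distrib, Finset.prod_const, card_lt_pairs]
      ring
    calc (∑ σ : Equiv.Perm (Fin n), MvPolynomial.eval (fun j => t (σ j)) Q /
          ∏ j, ∏ i ∈ Finset.univ.erase (σ j), (t i - t (σ j)))
        = ∑ σ : Equiv.Perm (Fin n),
            (-1 : ℂ) ^ (n * (n - 1) / 2) * MvPolynomial.eval (fun j => t (σ j)) P := by
          refine Finset.sum_congr rfl fun σ _ => ?_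
          rw [hevalQ, hden, hDsplit]
          have hV2 : ((∏ p ∈ Finset.univ.filter (fun p : Fin n × Fin n => p.1 < p.2),
              (t (σ p.1) - t (σ p.2))) ^ 2) ≠ 0 := pow_ne_zero _ (hVne σ)
          have hs : ((-1 : ℂ) ^ (n * (n - 1) / 2)) * ((-1 : ℂ) ^ (n * (n - 1) / 2)) = 1 := by
            rw [← pow_add]; exact Even.neg_one_pow ⟨_, rfl⟩
          rw [div_eq_iff (mul_ne_zero (pow_ne_zero _ (by norm_num : (-1:ℂ) ≠ 0)) hV2)]
          rw [show ((-1 : ℂ) ^ (n * (n - 1) / 2) * MvPolynomial.eval (fun j => t (σ j)) P *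
              ((-1 : ℂ) ^ (n * (n - 1) / 2) *
                (∏ p ∈ Finset.univ.filter (fun p : Fin n × Fin n => p.1 < p.2),
                  (t (σ p.1) - t (σ p.2))) ^ 2)) =
              (((-1 : ℂ) ^ (n * (n - 1) / 2)) * ((-1 : ℂ) ^ (n * (n - 1) / 2))) *
                (MvPolynomial.eval (fun j => t (σ j)) P *
                  (∏ p ∈ Finset.univ.filter (fun p : Fin n × Fin n => p.1 < p.2),
                    (t (σ p.1) - t (σ p.2))) ^ 2) from by ring, hs, one_mul]
      _ = _ := by rw [← Finset.mul_sum]
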